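/- Suppose (Σ⁺, σ) is a topologically mixing one-sided countable Markov shift with property (BIP), f : Σ⁺ → ℝ is locally Hölder continuous, and d(f) is finite. Then for every b > d(f) there exists D > 0 such that for all t > 0: (1) #{a ∈ 𝒜 : I(f,a) ≤ t} ≤ D e^{bt}, and (2) for every x ∈ Σ⁺, #{y ∈ Σ⁺ : σ(y) = x and f(y) ≤ t} ≤ D e^{bt}. -/
import Mathlib


open scoped ENNReal NNReal
open Filter MeasureTheory Set

namespace CMS

variable {A : Type*}

/-- The one-sided countable Markov shift space determined by transition matrix `T`. -/
def SigmaPlus (T : A → A → Prop) : Set (ℕ → A) :=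
  {x | ∀ i, T (x i) (x (i + 1))}

/-- The shift map on `SigmaPlus T`. -/
def shift (T : A → A → Prop) (x : SigmaPlus T) : SigmaPlus T :=
  ⟨fun i => x.1 (i + 1), fun i => x.2 (i + 1)⟩

/-- Topological mixing. -/
def TopMixing (T : A → A → Prop) : Prop :=
  ∀ a b : A, ∃ N : ℕ, ∀ n ≥ N, ∃ x : SigmaPlus T, x.1 0 = a ∧ x.1 n = b

/-- The big images and preimages property. -/
def BIP (T : A → A → Prop) : Prop :=
  ∃ B : Finset A, ∀ a : A, ∃ b₀ ∈ B, ∃ b₁ ∈ B, T b₀ a ∧ T a b₁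

/-- Locally Hölder continuous. -/
def LocHolder (T : A → A → Prop) (f : SigmaPlus T → ℝ) : Prop :=
  ∃ C > (0 : ℝ), ∃ α > (0 : ℝ), ∀ n : ℕ, 1 ≤ n → ∀ x y : SigmaPlus T,
    (∀ i < n, x.1 i = y.1 i) → |f x - f y| ≤ C * Real.exp (-α * n)

/-- Birkhoff (ergodic) sum `S_n f`. -/
noncomputable def birkhoff (T : A → A → Prop) (f : SigmaPlus T → ℝ) (n : ℕ)
    (x : SigmaPlus T) : ℝ :=
  ∑ i ∈ Finset.range n, f ((shift T)^[i] x)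

/-- Points of period `n`: `Fix^n`. -/
def Mfix (T : A → A → Prop) (n : ℕ) : Set (SigmaPlus T) :=
  {x | (shift T)^[n] x = x}

/-- `S(f,a)`, the sup of `f` on the cylinder of the letter `a`. -/
noncomputable def Ssup (T : A → A → Prop) (f : SigmaPlus T → ℝ) (a : A) : ℝ :=
  sSup (f '' {x : SigmaPlus T | x.1 0 = a})

/-- `I(f,a)`, the inf of `f` on the cylinder of the letter `a`. -/
noncomputable def Iinf (T : A → A → Prop) (f : SigmaPlus T → ℝ) (a : A) : ℝ :=
  sInf (f '' {x : SigmaPlus T | x.1 0 = a})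

/-- The set of `s > 0` where `Z₁(f,s) = Σ_a e^{-s S(f,a)}` converges. -/
def convSet (T : A → A → Prop) (f : SigmaPlus T → ℝ) : Set ℝ :=
  {s | 0 < s ∧ Summable fun a : A => Real.exp (-s * Ssup T f a)}

/-- The critical exponent `d(f)` of `Z₁(f,·)`. -/
noncomputable def dcrit (T : A → A → Prop) (f : SigmaPlus T → ℝ) : ℝ :=
  sInf (convSet T f)

/-- Eventually positive. -/
def EvPositive (T : A → A → Prop) (f : SigmaPlus T → ℝ) : Prop :=
  ∃ N : ℕ, ∃ B > (0 : ℝ), ∀ n ≥ N, ∀ x : SigmaPlus T, B < birkhoff T f n x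

/-- Strictly positive: `inf f > 0`. -/
def StrictPositive (T : A → A → Prop) (f : SigmaPlus T → ℝ) : Prop :=
  ∃ c > (0 : ℝ), ∀ x : SigmaPlus T, c ≤ f x

/-- Non-arithmetic: the subgroup of `ℝ` generated by the periods is not cyclic. -/
def NonArithmetic (T : A → A → Prop) (f : SigmaPlus T → ℝ) : Prop :=
  ¬ ∃ c : ℝ, ∀ n : ℕ, 1 ≤ n → ∀ x ∈ Mfix T n, ∃ m : ℤ, birkhoff T f n x = m * c

/-- Extended logarithm `ℝ≥0∞ → EReal`. -/
noncomputable def elog (x : ℝ≥0∞) : EReal :=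
  if x = 0 then ⊥ else if x = ⊤ then ⊤ else ((Real.log x.toReal : ℝ) : EReal)

/-- The Gurevich partition sum `Z_n(f,a)` valued in `ℝ≥0∞`. -/
noncomputable def Zpart (T : A → A → Prop) (f : SigmaPlus T → ℝ) (a : A) (n : ℕ) : ℝ≥0∞ :=
  ∑' x : {x : SigmaPlus T // x ∈ Mfix T n ∧ x.1 0 = a},
    ENNReal.ofReal (Real.exp (birkhoff T f n x))

/-- `p` is the Gurevich pressure of `f`. -/
def HasGurevichPressure (T : A → A → Prop) (f : SigmaPlus T → ℝ) (p : EReal) : Prop :=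
  ∀ a : A, Tendsto (fun n : ℕ => (((n : ℝ)⁻¹ : ℝ) : EReal) * elog (Zpart T f a n))
    atTop (nhds p)

/-- `ℳ_f(n,t)`. -/
def Mset (T : A → A → Prop) (f : SigmaPlus T → ℝ) (n : ℕ) (t : ℝ) : Set (SigmaPlus T) :=
  {x | x ∈ Mfix T n ∧ birkhoff T f n x ≤ t}

/-- `M_f(t) = Σ_{n≥1} (1/n) #ℳ_f(n,t)`, valued in `[0,∞]`. -/
noncomputable def Mcount (T : A → A → Prop) (f : SigmaPlus T → ℝ) (t : ℝ) : ℝ≥0∞ :=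
  ∑' n : ℕ, ((n : ℝ≥0∞) + 1)⁻¹ * ((Mset T f (n + 1) t).encard : ℝ≥0∞)

/-- `ℛ_f(k,t)`. -/
def Rset (T : A → A → Prop) (f : SigmaPlus T → ℝ) (k : ℕ) (t : ℝ) : Set (SigmaPlus T) :=
  {x | x ∈ Mset T f k t ∧ ∀ n : ℕ, 1 ≤ n → n < k → x ∉ Mset T f n t}

/-- `R_f(t) = Σ_{k≥1} (1/k) #ℛ_f(k,t)`, valued in `[0,∞]`. -/
noncomputable def Rcount (T : A → A → Prop) (f : SigmaPlus T → ℝ) (t : ℝ) : ℝ≥0∞ :=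
  ∑' k : ℕ, ((k : ℝ≥0∞) + 1)⁻¹ * ((Rset T f (k + 1) t).encard : ℝ≥0∞)

/-- The cylinder determined by a word `w` of length `k`. -/
def cylinder (T : A → A → Prop) {k : ℕ} (w : Fin k → A) : Set (SigmaPlus T) :=
  {x | ∀ i : Fin k, x.1 i = w i}

/-- A σ-invariant Gibbs state for `f` (normalized so that `P(f) = 0`). -/
def GibbsState [MeasurableSpace A] (T : A → A → Prop) (f : SigmaPlus T → ℝ)
    (μ : Measure (SigmaPlus T)) : Prop :=
  IsProbabilityMeasure μ ∧ MeasurePreserving (shift T) μ μ ∧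
    ∃ B > (1 : ℝ), ∀ (n : ℕ), 1 ≤ n → ∀ (w : Fin n → A), ∀ x ∈ cylinder T w,
      1 / B ≤ (μ (cylinder T w)).toReal / Real.exp (birkhoff T f n x) ∧
        (μ (cylinder T w)).toReal / Real.exp (birkhoff T f n x) ≤ B

/-- The transfer (Ruelle–Perron–Frobenius) operator. -/
noncomputable def transfer (T : A → A → Prop) (g φ : SigmaPlus T → ℝ)
    (x : SigmaPlus T) : ℝ :=
  ∑' y : {y : SigmaPlus T // shift T y = x}, Real.exp (g y) * φ y

/-- The renewal function `N_f(φ,x,t)`, valued in `[0,∞]`. -/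
noncomputable def renewal (T : A → A → Prop) (f φ : SigmaPlus T → ℝ)
    (x : SigmaPlus T) (t : ℝ) : ℝ≥0∞ :=
  ∑' n : ℕ, ∑' y : {y : SigmaPlus T // (shift T)^[n] y = x},
    ENNReal.ofReal (if birkhoff T f n y ≤ t then φ y else 0)

/-- Counting lemma: the set of indices where a nonnegative summable function is at
least `ε > 0` has at most `(∑' g)/ε` elements. -/
lemma count_of_summable {A : Type*} (g : A → ℝ) (hg : Summable g)
    (h0 : ∀ a, 0 ≤ g a) {ε : ℝ} (hε : 0 < ε) :
    ({a : A | ε ≤ g a}.encard : ℝ≥0∞) ≤ ENNReal.ofReal ((∑' a, g a) / ε) := by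
  have hfin : {a : A | ε ≤ g a}.Finite := by
    have h1 : ∀ᶠ a in Filter.cofinite, |g a - 0| < ε :=
      (hg.tendsto_cofinite_zero).eventually (Metric.ball_mem_nhds 0 hε)
    have h2 : {a : A | ε ≤ g a} ⊆ {a : A | ¬ |g a - 0| < ε} := by
      intro a ha
      simp only [Set.mem_setOf_eq, not_lt, sub_zero, abs_of_nonneg (h0 a)]
      exact ha
    exact (Filter.eventually_cofinite.mp h1).subset h2
  rw [Set.Finite.encard_eq_coe_toFinset_card hfin]
  rw [show ((hfin.toFinset.card : ℕ∞) : ℝ≥0∞) = ENNReal.ofReal (hfin.toFinset.card : ℝ) by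
    simp]
  apply ENNReal.ofReal_le_ofReal
  rw [le_div_iff₀ hε]
  calc (hfin.toFinset.card : ℝ) * ε = ∑ _a ∈ hfin.toFinset, ε := by
        rw [Finset.sum_const, nsmul_eq_mul]
    _ ≤ ∑ a ∈ hfin.toFinset, g a := by
        apply Finset.sum_le_sum
        intro a ha
        exact (hfin.mem_toFinset.mp ha)
    _ ≤ ∑' a, g a := Summable.sum_le_tsum _ (fun a _ => h0 a) hg

/-- Growth of the alphabet: for every `b > d(f)` there is `D > 0` with
`#{a : I(f,a) ≤ t} ≤ D e^{bt}` and `#{y ∈ σ⁻¹(x) : f(y) ≤ t} ≤ D e^{bt}`. -/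
theorem growth_of_alphabet
    {A : Type*} [Countable A] (T : A → A → Prop)
    (f : SigmaPlus T → ℝ)
    (hmix : TopMixing T) (hbip : BIP T)
    (hhold : LocHolder T f)
    (hfin : (convSet T f).Nonempty) :
    ∀ b : ℝ, dcrit T f < b →
      ∃ D > (0 : ℝ), ∀ t > (0 : ℝ),
        (({a : A | Iinf T f a ≤ t}.encard : ℝ≥0∞) ≤
            ENNReal.ofReal (D * Real.exp (b * t))) ∧
        ∀ x : SigmaPlus T,
          (({y : SigmaPlus T | shift T y = x ∧ f y ≤ t}.encard : ℝ≥0∞) ≤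
            ENNReal.ofReal (D * Real.exp (b * t))) := by
  intro b hb
  obtain ⟨C, hC, α, hα, hH⟩ := hhold
  obtain ⟨s, hs, hsb⟩ := exists_lt_of_csInf_lt hfin hb
  obtain ⟨hs0, hsum⟩ := hs
  set C' : ℝ := C * Real.exp (-α) with hC'def
  have hC'pos : 0 < C' := mul_pos hC (Real.exp_pos _)
  -- Hölder on 1-cylinders
  have hH1 : ∀ x y : SigmaPlus T, x.1 0 = y.1 0 → |f x - f y| ≤ C' := by
    intro x y hxy
    have := hH 1 le_rfl x y (by intro i hi; interval_cases i; exact hxy)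
    simpa using this
  set Z : ℝ := ∑' a, Real.exp (-s * Ssup T f a) with hZdef
  have hZ0 : 0 ≤ Z := tsum_nonneg fun a => (Real.exp_pos _).le
  refine ⟨(Z + 1) * Real.exp (2 * s * C'), by positivity, fun t ht => ?_⟩
  set ε : ℝ := Real.exp (-s * (t + 2 * C')) with hεdef
  have hε : 0 < ε := Real.exp_pos _
  -- key inclusion
  have hincl : {a : A | Iinf T f a ≤ t} ⊆ {a : A | ε ≤ Real.exp (-s * Ssup T f a)} := by
    intro a ha
    simp only [Set.mem_setOf_eq] at ha ⊢
    have hSle : Ssup T f a ≤ t + 2 * C' := by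
      by_cases hne : (f '' {x : SigmaPlus T | x.1 0 = a}).Nonempty
      · obtain ⟨v, x0, hx0, rfl⟩ := hne
        have hbdd : ∀ w ∈ f '' {x : SigmaPlus T | x.1 0 = a}, w ∈ Set.Icc (f x0 - C') (f x0 + C') := by
          rintro w ⟨x, hx, rfl⟩
          have := hH1 x x0 (by rw [hx, hx0])
          obtain ⟨l, u⟩ := abs_le.mp this
          exact ⟨by linarith, by linarith⟩
        have hbb : BddBelow (f '' {x : SigmaPlus T | x.1 0 = a}) :=
          ⟨f x0 - C', fun w hw => (hbdd w hw).1⟩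
        have hIlb : f x0 - C' ≤ Iinf T f a :=
          le_csInf ⟨f x0, x0, hx0, rfl⟩ (fun w hw => (hbdd w hw).1)
        have hSub : Ssup T f a ≤ f x0 + C' :=
          csSup_le ⟨f x0, x0, hx0, rfl⟩ (fun w hw => (hbdd w hw).2)
        have : f x0 ≤ Iinf T f a + C' := by linarith
        calc Ssup T f a ≤ f x0 + C' := hSub
          _ ≤ Iinf T f a + 2 * C' := by linarith
          _ ≤ t + 2 * C' := by linarith
      · rw [Set.not_nonempty_iff_eq_empty] at hne
        rw [Ssup, hne, Real.sSup_empty]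
        positivity
    rw [hεdef]
    apply Real.exp_le_exp.mpr
    nlinarith
  have hεbound : Z / ε ≤ (Z + 1) * Real.exp (2 * s * C') * Real.exp (b * t) := by
    rw [hεdef, div_eq_mul_inv, ← Real.exp_neg]
    have h1 : Real.exp (-(-s * (t + 2 * C'))) = Real.exp (s * t) * Real.exp (2 * s * C') := by
      rw [← Real.exp_add]; ring_nf
    rw [h1]
    have h2 : Real.exp (s * t) ≤ Real.exp (b * t) :=
      Real.exp_le_exp.mpr (by nlinarith)
    have h3 : (0:ℝ) ≤ Real.exp (2 * s * C') := (Real.exp_pos _).le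
    have h5 : Z * Real.exp (s * t) ≤ (Z + 1) * Real.exp (b * t) := by
      nlinarith [Real.exp_pos (b * t), Real.exp_pos (s * t)]
    calc Z * (Real.exp (s * t) * Real.exp (2 * s * C'))
        = (Z * Real.exp (s * t)) * Real.exp (2 * s * C') := by ring
      _ ≤ ((Z + 1) * Real.exp (b * t)) * Real.exp (2 * s * C') :=
          mul_le_mul_of_nonneg_right h5 h3
      _ = (Z + 1) * Real.exp (2 * s * C') * Real.exp (b * t) := by ring
  have key : ({a : A | Iinf T f a ≤ t}.encard : ℝ≥0∞) ≤
      ENNReal.ofReal ((Z + 1) * Real.exp (2 * s * C') * Real.exp (b * t)) := by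
    calc ({a : A | Iinf T f a ≤ t}.encard : ℝ≥0∞)
        ≤ ({a : A | ε ≤ Real.exp (-s * Ssup T f a)}.encard : ℝ≥0∞) := by
          exact_mod_cast Set.encard_mono hincl
      _ ≤ ENNReal.ofReal (Z / ε) :=
          count_of_summable _ hsum (fun a => (Real.exp_pos _).le) hε
      _ ≤ _ := ENNReal.ofReal_le_ofReal hεbound
  refine ⟨key, fun x => ?_⟩
  -- inject preimages into letters
  have hinj : Set.InjOn (fun y : SigmaPlus T => y.1 0)
      {y : SigmaPlus T | shift T y = x ∧ f y ≤ t} := by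
    rintro y ⟨hy, _⟩ y' ⟨hy', _⟩ h0
    apply Subtype.ext
    funext i
    cases i with
    | zero => exact h0
    | succ n =>
      have e1 : y.1 (n + 1) = x.1 n := congrArg (fun z => z.1 n) hy
      have e2 : y'.1 (n + 1) = x.1 n := congrArg (fun z => z.1 n) hy'
      rw [e1, e2]
  have himg : (fun y : SigmaPlus T => y.1 0) '' {y : SigmaPlus T | shift T y = x ∧ f y ≤ t}
      ⊆ {a : A | Iinf T f a ≤ t} := by
    rintro a ⟨y, ⟨hy, hft⟩, rfl⟩
    have hbb : BddBelow (f '' {z : SigmaPlus T | z.1 0 = y.1 0}) := by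
      refine ⟨f y - C', ?_⟩
      rintro w ⟨z, hz, rfl⟩
      have := hH1 z y hz
      linarith [(abs_le.mp this).1]
    have : Iinf T f (y.1 0) ≤ f y := csInf_le hbb ⟨y, rfl, rfl⟩
    exact le_trans this hft
  calc ({y : SigmaPlus T | shift T y = x ∧ f y ≤ t}.encard : ℝ≥0∞)
      = (((fun y : SigmaPlus T => y.1 0) ''
          {y : SigmaPlus T | shift T y = x ∧ f y ≤ t}).encard : ℝ≥0∞) := by
        rw [hinj.encard_image]
    _ ≤ ({a : A | Iinf T f a ≤ t}.encard : ℝ≥0∞) := by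
        exact_mod_cast Set.encard_mono himg
    _ ≤ _ := key


end CMS
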